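/- For every natural number n ≥ 1, White has a winning strategy in the game G_n. The game G_n is played on a board with 2^n columns and n rows (rows numbered 0,…,n−1 from bottom to top). White and Black move alternately, White first, for ω rounds; on each move a player may pass, or place a pawn of his/her color on some cell; Black may instead blacken some cell. Pawns and blackenings are never removed. Constraints: for each i, each player places at most 2^i pawns in total in row i; Black blackens at most ⌊n/2⌋ cells in each column. A player violating a constraint loses immediately. In the limit position, a white pawn on cell (column x, row i) is dead if that cell is blackened or some black pawn lies in column x in a row strictly below i. If no constraint is violated, Black wins if every white pawn is dead, and White wins otherwise (i.e., if at least one white pawn is alive). -/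

import Mathlib

/-- A cell of the board of the game `G n`: a column (one of `2^n`) and a row
(one of `n`, numbered from the bottom). -/
abbrev Cell (n : ℕ) := Fin (2 ^ n) × Fin n

/-- A move of White: pass (`none`) or place a white pawn on a cell. -/
abbrev WMove (n : ℕ) := Option (Cell n)

/-- A move of Black: pass (`none`), place a black pawn on a cell (`some (inl c)`),
or blacken a cell (`some (inr c)`). -/
abbrev BMove (n : ℕ) := Option (Cell n ⊕ Cell n)

/-- A strategy for White: the next move as a function of the list of Black's previous
moves. -/
abbrev WStrat (n : ℕ) := List (BMove n) → WMove n

/-- A strategy for Black: the next move as a function of the list of White's previous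
moves (including White's move of the current round, since White moves first). -/
abbrev BStrat (n : ℕ) := List (WMove n) → BMove n

/-- The history of the first `k` rounds of the play in which White follows `σ` and Black
follows `τ`; in each round White moves first. -/
def hist (n : ℕ) (σ : WStrat n) (τ : BStrat n) : ℕ → List (WMove n × BMove n)
  | 0 => []
  | k + 1 =>
    let h := hist n σ τ k
    let wm := σ (h.map Prod.snd)
    let bm := τ (h.map Prod.fst ++ [wm])
    h ++ [(wm, bm)]

/-- White's move in round `k` of the play `σ` versus `τ`. -/
def wmove (n : ℕ) (σ : WStrat n) (τ : BStrat n) (k : ℕ) : WMove n :=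
  σ ((hist n σ τ k).map Prod.snd)

/-- Black's move in round `k` of the play `σ` versus `τ`. -/
def bmove (n : ℕ) (σ : WStrat n) (τ : BStrat n) (k : ℕ) : BMove n :=
  τ ((hist n σ τ k).map Prod.fst ++ [wmove n σ τ k])

/-- White violates a constraint at her move of round `k`: for some row `i`, more than
`2^i` white pawns have been placed in row `i` during rounds `0,…,k`. -/
def WViol (n : ℕ) (w : ℕ → WMove n) (k : ℕ) : Prop :=
  ∃ i : Fin n, 2 ^ (i : ℕ) < {j : ℕ | j ≤ k ∧ ∃ col, w j = some (col, i)}.ncard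

/-- Black violates a constraint at his move of round `k`: for some row `i`, more than
`2^i` black pawns have been placed in row `i` during rounds `0,…,k`, or for some column
more than `⌊n/2⌋` of its cells have been blackened during rounds `0,…,k`. -/
def BViol (n : ℕ) (b : ℕ → BMove n) (k : ℕ) : Prop :=
  (∃ i : Fin n, 2 ^ (i : ℕ) <
      {j : ℕ | j ≤ k ∧ ∃ col, b j = some (Sum.inl (col, i))}.ncard) ∨
  (∃ col : Fin (2 ^ n), n / 2 <
      {i : Fin n | ∃ j ≤ k, b j = some (Sum.inr (col, i))}.ncard)

/-- In the limit position, some white pawn is alive: it sits on a cell that is never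
blackened and has no black pawn strictly below it in its column. -/
def Alive (n : ℕ) (w : ℕ → WMove n) (b : ℕ → BMove n) : Prop :=
  ∃ (k : ℕ) (col : Fin (2 ^ n)) (i : Fin n), w k = some (col, i) ∧
    (∀ j : ℕ, b j ≠ some (Sum.inr (col, i))) ∧
    (∀ (j : ℕ) (i' : Fin n), (i' : ℕ) < (i : ℕ) → b j ≠ some (Sum.inl (col, i')))

/-- White wins the play `(w, b)`: either Black is the first to violate a constraint
(at some round `k`, White having been clean at all her moves up to and including round
`k`), or nobody ever violates a constraint and some white pawn is alive in the limit. -/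
def WhiteWins (n : ℕ) (w : ℕ → WMove n) (b : ℕ → BMove n) : Prop :=
  (∃ k : ℕ, BViol n b k ∧ ∀ j ≤ k, ¬ WViol n w j) ∨
  ((∀ k, ¬ WViol n w k) ∧ (∀ k, ¬ BViol n b k) ∧ Alive n w b)

namespace Stmt15

open scoped Classical
open Finset

variable {n : ℕ}

def blkd (bs : List (BMove n)) (x : Fin (2 ^ n)) (i : Fin n) : Prop :=
  some (Sum.inr (x, i)) ∈ bs

def pawnAt (bs : List (BMove n)) (x : Fin (2 ^ n)) (m : Fin n) : Prop :=
  some (Sum.inl (x, m)) ∈ bs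

def pawnBelow (bs : List (BMove n)) (x : Fin (2 ^ n)) (i : Fin n) : Prop :=
  ∃ m : Fin n, (m : ℕ) < (i : ℕ) ∧ pawnAt bs x m

def cleanCol (bs : List (BMove n)) (x : Fin (2 ^ n)) : Prop :=
  ∀ m : Fin n, (m : ℕ) + 1 < n → ¬ pawnAt bs x m

noncomputable def topFree (bs : List (BMove n)) (x : Fin (2 ^ n)) : Option (Fin n) :=
  if h : (Finset.univ.filter (fun i : Fin n => ¬ blkd bs x i)).Nonempty then
    some ((Finset.univ.filter (fun i : Fin n => ¬ blkd bs x i)).max' h) else none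

noncomputable def nextBelow (bs : List (BMove n)) (x : Fin (2 ^ n)) (i : Fin n) :
    Option (Fin n) :=
  if h : (Finset.univ.filter (fun j : Fin n => (j : ℕ) < (i : ℕ) ∧ ¬ blkd bs x j)).Nonempty then
    some ((Finset.univ.filter (fun j : Fin n => (j : ℕ) < (i : ℕ) ∧ ¬ blkd bs x j)).max' h) else none

noncomputable def freshCol (ent : Finset (Fin (2 ^ n))) (bs : List (BMove n)) :
    Option (Fin (2 ^ n)) :=
  if h : ∃ x, x ∉ ent ∧ cleanCol bs x then some h.choose else none

structure St (n : ℕ) where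
  bs : List (BMove n)
  cur : Option (Cell n)
  ent : Finset (Fin (2 ^ n))
  out : WMove n

noncomputable def step (s : St n) (b : BMove n) : St n :=
  match s.cur with
  | none => ⟨s.bs ++ [b], none, s.ent, none⟩
  | some (x, i) =>
    if b = some (Sum.inr (x, i)) then
      match nextBelow (s.bs ++ [b]) x i with
      | some j => ⟨s.bs ++ [b], some (x, j), s.ent, some (x, j)⟩
      | none => ⟨s.bs ++ [b], none, s.ent, none⟩
    else if ∃ m : Fin n, (m : ℕ) < (i : ℕ) ∧ b = some (Sum.inl (x, m)) then
      match freshCol s.ent (s.bs ++ [b]) with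
      | some x' =>
        match topFree (s.bs ++ [b]) x' with
        | some e => ⟨s.bs ++ [b], some (x', e), insert x' s.ent, some (x', e)⟩
        | none => ⟨s.bs ++ [b], none, s.ent, none⟩
      | none => ⟨s.bs ++ [b], none, s.ent, none⟩
    else ⟨s.bs ++ [b], some (x, i), s.ent, none⟩

noncomputable def init (n : ℕ) (hn : 1 ≤ n) : St n :=
  ⟨[], some (⟨0, by positivity⟩, ⟨n - 1, by omega⟩), {(⟨0, by positivity⟩ : Fin (2 ^ n))},
    some (⟨0, by positivity⟩, ⟨n - 1, by omega⟩)⟩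

noncomputable def run (hn : 1 ≤ n) (B : ℕ → BMove n) : ℕ → St n
  | 0 => init n hn
  | k + 1 => step (run hn B k) (B k)

noncomputable def sigma (n : ℕ) (hn : 1 ≤ n) : WStrat n :=
  fun bs => (bs.foldl step (init n hn)).out

def pref (B : ℕ → BMove n) (k : ℕ) : List (BMove n) := (List.range k).map B


section Spec
variable {bs : List (BMove n)} {x : Fin (2 ^ n)} {i j e : Fin n} {ent : Finset (Fin (2 ^ n))}

lemma nextBelow_some (h : nextBelow bs x i = some j) :
    ((j : ℕ) < (i : ℕ) ∧ ¬ blkd bs x j) ∧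
      ∀ j' : Fin n, (j' : ℕ) < (i : ℕ) → ¬ blkd bs x j' → j' ≤ j := by
  unfold nextBelow at h
  split at h
  · next hne =>
    obtain rfl : _ = j := Option.some.inj h
    constructor
    · have := Finset.max'_mem _ hne
      simpa using this
    · intro j' h1 h2
      exact Finset.le_max' _ _ (by simpa using ⟨h1, h2⟩)
  · simp at h

lemma nextBelow_none (h : nextBelow bs x i = none) :
    ∀ j : Fin n, (j : ℕ) < (i : ℕ) → blkd bs x j := by
  unfold nextBelow at h
  split at h
  · simp at h
  · next hne =>
    intro j hj
    by_contra hb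
    exact hne ⟨j, by simpa using ⟨hj, hb⟩⟩

lemma topFree_some (h : topFree bs x = some e) :
    ¬ blkd bs x e ∧ ∀ j' : Fin n, ¬ blkd bs x j' → j' ≤ e := by
  unfold topFree at h
  split at h
  · next hne =>
    obtain rfl : _ = e := Option.some.inj h
    constructor
    · have := Finset.max'_mem _ hne
      simpa using this
    · intro j' h2
      exact Finset.le_max' _ _ (by simpa using h2)
  · simp at h

lemma topFree_none (h : topFree bs x = none) : ∀ j : Fin n, blkd bs x j := by
  unfold topFree at h
  split at h
  · simp at h
  · next hne =>
    intro j
    by_contra hb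
    exact hne ⟨j, by simpa using hb⟩

lemma freshCol_some (h : freshCol ent bs = some x) : x ∉ ent ∧ cleanCol bs x := by
  unfold freshCol at h
  split at h
  · next hex =>
    obtain rfl : _ = x := Option.some.inj h
    exact hex.choose_spec
  · simp at h

lemma freshCol_none (h : freshCol ent bs = none) :
    ∀ y, y ∉ ent → ¬ cleanCol bs y := by
  unfold freshCol at h
  split at h
  · simp at h
  · next hex =>
    intro y h1 h2
    exact hex ⟨y, h1, h2⟩

end Spec

section StepCases
variable {s : St n} {b : BMove n} {x x' : Fin (2 ^ n)} {i j e : Fin n}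

lemma step_none (h : s.cur = none) : step s b = ⟨s.bs ++ [b], none, s.ent, none⟩ := by
  unfold step; rw [h]

lemma step_blk_some (h : s.cur = some (x, i)) (hb : b = some (Sum.inr (x, i)))
    (hnb : nextBelow (s.bs ++ [b]) x i = some j) :
    step s b = ⟨s.bs ++ [b], some (x, j), s.ent, some (x, j)⟩ := by
  unfold step; rw [h]; simp only [if_pos hb, hnb]

lemma step_blk_none (h : s.cur = some (x, i)) (hb : b = some (Sum.inr (x, i)))
    (hnb : nextBelow (s.bs ++ [b]) x i = none) :
    step s b = ⟨s.bs ++ [b], none, s.ent, none⟩ := by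
  unfold step; rw [h]; simp only [if_pos hb, hnb]

lemma step_ev_some (h : s.cur = some (x, i)) (hb : b ≠ some (Sum.inr (x, i)))
    (hev : ∃ m : Fin n, (m : ℕ) < (i : ℕ) ∧ b = some (Sum.inl (x, m)))
    (hf : freshCol s.ent (s.bs ++ [b]) = some x')
    (ht : topFree (s.bs ++ [b]) x' = some e) :
    step s b = ⟨s.bs ++ [b], some (x', e), insert x' s.ent, some (x', e)⟩ := by
  unfold step; rw [h]; simp only [if_neg hb, if_pos hev, hf, ht]

lemma step_ev_nofresh (h : s.cur = some (x, i)) (hb : b ≠ some (Sum.inr (x, i)))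
    (hev : ∃ m : Fin n, (m : ℕ) < (i : ℕ) ∧ b = some (Sum.inl (x, m)))
    (hf : freshCol s.ent (s.bs ++ [b]) = none) :
    step s b = ⟨s.bs ++ [b], none, s.ent, none⟩ := by
  unfold step; rw [h]; simp only [if_neg hb, if_pos hev, hf]

lemma step_ev_notop (h : s.cur = some (x, i)) (hb : b ≠ some (Sum.inr (x, i)))
    (hev : ∃ m : Fin n, (m : ℕ) < (i : ℕ) ∧ b = some (Sum.inl (x, m)))
    (hf : freshCol s.ent (s.bs ++ [b]) = some x')
    (ht : topFree (s.bs ++ [b]) x' = none) :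
    step s b = ⟨s.bs ++ [b], none, s.ent, none⟩ := by
  unfold step; rw [h]; simp only [if_neg hb, if_pos hev, hf, ht]

lemma step_nokill (h : s.cur = some (x, i)) (hb : b ≠ some (Sum.inr (x, i)))
    (hev : ¬ ∃ m : Fin n, (m : ℕ) < (i : ℕ) ∧ b = some (Sum.inl (x, m))) :
    step s b = ⟨s.bs ++ [b], some (x, i), s.ent, none⟩ := by
  unfold step; rw [h]; simp only [if_neg hb, if_neg hev]

end StepCases


section Counting
variable (hn : 1 ≤ n) (B : ℕ → BMove n)

lemma pref_succ (k : ℕ) : pref B (k + 1) = pref B k ++ [B k] := by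
  simp [pref, List.range_succ]

lemma mem_pref {v : BMove n} {k : ℕ} : v ∈ pref B k ↔ ∃ j < k, B j = v := by
  simp [pref, eq_comm]

lemma blkd_append {bs : List (BMove n)} {b : BMove n} {x : Fin (2 ^ n)} {i : Fin n} :
    blkd (bs ++ [b]) x i ↔ blkd bs x i ∨ b = some (Sum.inr (x, i)) := by
  simp [blkd, eq_comm]

lemma pawnAt_append {bs : List (BMove n)} {b : BMove n} {x : Fin (2 ^ n)} {m : Fin n} :
    pawnAt (bs ++ [b]) x m ↔ pawnAt bs x m ∨ b = some (Sum.inl (x, m)) := by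
  simp [pawnAt, eq_comm]

lemma filtercard_succ (p : ℕ → Prop) [DecidablePred p] (k : ℕ) :
    (((Finset.range (k + 1)).filter p).card : ℕ) =
      ((Finset.range k).filter p).card + if p k then 1 else 0 := by
  rw [Finset.range_add_one, Finset.filter_insert]
  split
  · rw [Finset.card_insert_of_notMem (by simp)]
  · simp

noncomputable def Pp (i : Fin n) (k : ℕ) : Finset ℕ :=
  (Finset.range k).filter (fun j => ∃ col, (run hn B j).out = some (col, i))

def Evt (j : ℕ) : Prop :=
  ∃ (x : Fin (2 ^ n)) (r m : Fin n),
    (run hn B j).cur = some (x, r) ∧ (m : ℕ) < (r : ℕ) ∧ B j = some (Sum.inl (x, m))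

def EvtL (i : Fin n) (j : ℕ) : Prop :=
  ∃ (x : Fin (2 ^ n)) (r m : Fin n),
    (run hn B j).cur = some (x, r) ∧ (m : ℕ) < (r : ℕ) ∧ B j = some (Sum.inl (x, m)) ∧
      (r : ℕ) ≤ (i : ℕ)

noncomputable def EvS (i : Fin n) (k : ℕ) : Finset ℕ :=
  (Finset.range k).filter (EvtL hn B i)

noncomputable def EvA (k : ℕ) : Finset ℕ :=
  (Finset.range k).filter (Evt hn B)

def indOK (s : St n) (i : Fin n) : Prop :=
  ∀ (x : Fin (2 ^ n)) (r : Fin n), s.cur = some (x, r) → (r : ℕ) ≤ (i : ℕ)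

lemma Pp_succ (i : Fin n) (k : ℕ) :
    (Pp hn B i (k + 1)).card =
      (Pp hn B i k).card + if (∃ col, (run hn B k).out = some (col, i)) then 1 else 0 := by
  unfold Pp; exact filtercard_succ (fun j => ∃ col, (run hn B j).out = some (col, i)) k

lemma EvS_succ (i : Fin n) (k : ℕ) :
    (EvS hn B i (k + 1)).card = (EvS hn B i k).card + if EvtL hn B i k then 1 else 0 := by
  unfold EvS; exact filtercard_succ (EvtL hn B i) k

lemma EvA_succ (k : ℕ) :
    (EvA hn B (k + 1)).card = (EvA hn B k).card + if Evt hn B k then 1 else 0 := by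
  unfold EvA; exact filtercard_succ (Evt hn B) k

end Counting


lemma main_inv (hn : 1 ≤ n) (B : ℕ → BMove n) (k : ℕ) :
    (run hn B k).bs = pref B k ∧
    (∀ (x : Fin (2 ^ n)) (i : Fin n), (run hn B k).cur = some (x, i) →
      ¬ blkd (pref B k) x i ∧ ¬ pawnBelow (pref B k) x i ∧
        ∀ i' : Fin n, (i : ℕ) < (i' : ℕ) → blkd (pref B k) x i') ∧
    (∀ c, (run hn B k).out = some c → (run hn B k).cur = some c) ∧
    (∀ r : Fin n, (Pp hn B r (k + 1)).card ≤
      (EvS hn B r k).card + if indOK (run hn B k) r then 1 else 0) ∧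
    (run hn B k).ent.card ≤ 1 + (EvA hn B k).card := by
  induction k with
  | zero =>
    have h0 : run hn B 0 = init n hn := rfl
    refine ⟨by rw [h0]; simp [init, pref], ?_, ?_, ?_, by rw [h0]; simp [init]⟩
    · intro x i hc
      rw [h0] at hc
      have hx : i = (⟨n - 1, by omega⟩ : Fin n) :=
        (by simpa [init, Prod.ext_iff] using hc.symm :
          x = (⟨0, by positivity⟩ : Fin (2 ^ n)) ∧ i = (⟨n - 1, by omega⟩ : Fin n)).2
      refine ⟨by simp [pref, blkd], by simp [pref, pawnBelow, pawnAt], ?_⟩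
      intro i' hi'
      rw [hx] at hi'
      simp at hi'
      exact absurd i'.isLt (by omega)
    · intro c hc
      rw [h0] at hc ⊢
      simpa [init] using hc
    · intro r
      rw [Pp_succ]
      have hP0 : (Pp hn B r 0).card = 0 := by simp [Pp]
      rw [hP0]
      by_cases hr : (∃ col, (run hn B 0).out = some (col, r))
      · rw [if_pos hr]
        obtain ⟨col, hcol⟩ := hr
        rw [h0] at hcol
        have hir : ((⟨n - 1, by omega⟩ : Fin n) : ℕ) = (r : ℕ) := by
          have : r = (⟨n - 1, by omega⟩ : Fin n) :=
            (by simpa [init, Prod.ext_iff] using hcol.symm :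
              col = (⟨0, by positivity⟩ : Fin (2 ^ n)) ∧ r = (⟨n - 1, by omega⟩ : Fin n)).2
          rw [this]
        have hind : indOK (run hn B 0) r := by
          intro x' r' hc'
          rw [h0] at hc'
          have : r' = (⟨n - 1, by omega⟩ : Fin n) :=
            (by simpa [init, Prod.ext_iff] using hc'.symm :
              x' = (⟨0, by positivity⟩ : Fin (2 ^ n)) ∧ r' = (⟨n - 1, by omega⟩ : Fin n)).2
          rw [this]
          omega
        rw [if_pos hind]
        simp
      · rw [if_neg hr]
        simp
  | succ k IH =>
    obtain ⟨ih1, ih2, ih3, ih4, ih5⟩ := IH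
    have hrun : run hn B (k + 1) = step (run hn B k) (B k) := rfl
    have hps : pref B (k + 1) = pref B k ++ [B k] := pref_succ B k
    have hbs' : (run hn B k).bs ++ [B k] = pref B (k + 1) := by rw [ih1, hps]
    rcases hcur : (run hn B k).cur with _ | ⟨x, i⟩
    · -- current is none : everything stays dead
      have hs : run hn B (k + 1) =
          ⟨(run hn B k).bs ++ [B k], none, (run hn B k).ent, none⟩ := by
        rw [hrun, step_none hcur]
      have hnoev : ¬ Evt hn B k := by
        rintro ⟨x', r', m, hc', -⟩
        rw [hcur] at hc'
        simp at hc'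
      refine ⟨by rw [hs]; exact hbs', ?_, ?_, ?_, ?_⟩
      · intro x i hc
        rw [hs] at hc
        simp at hc
      · intro c hc
        rw [hs] at hc
        simp at hc
      · intro r
        rw [Pp_succ, EvS_succ]
        have h1 : ¬ (∃ col, (run hn B (k + 1)).out = some (col, r)) := by
          rw [hs]; simp
        have h2 : ¬ EvtL hn B r k := by
          rintro ⟨x', r', m, hc', -⟩
          rw [hcur] at hc'
          simp at hc'
        have h3 : indOK (run hn B (k + 1)) r := by
          intro a b hc'
          rw [hs] at hc'
          simp at hc'
        have h4 : indOK (run hn B k) r := by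
          intro a b hc'
          rw [hcur] at hc'
          simp at hc'
        rw [if_pos h3, if_neg h1, if_neg h2]
        have := ih4 r
        rw [if_pos h4] at this
        omega
      · rw [EvA_succ]
        have : (run hn B (k + 1)).ent = (run hn B k).ent := by rw [hs]
        rw [this]
        omega
    · by_cases hb : B k = some (Sum.inr (x, i))
      · -- current pawn is blackened
        have hevF : ∀ r : Fin n, ¬ EvtL hn B r k := by
          rintro r ⟨x', r', m, hc', -, hBk, -⟩
          rw [hb] at hBk
          simp at hBk
        have hevA : ¬ Evt hn B k := by
          rintro ⟨x', r', m, hc', -, hBk⟩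
          rw [hb] at hBk
          simp at hBk
        obtain ⟨hC2a, hC2b, hC2c⟩ := ih2 x i hcur
        rcases hnb : nextBelow ((run hn B k).bs ++ [B k]) x i with _ | j
        · -- give up (unreachable when Black is clean)
          have hs : run hn B (k + 1) =
              ⟨(run hn B k).bs ++ [B k], none, (run hn B k).ent, none⟩ := by
            rw [hrun, step_blk_none hcur hb hnb]
          refine ⟨by rw [hs]; exact hbs', ?_, ?_, ?_, ?_⟩
          · intro x0 i0 hc
            rw [hs] at hc
            simp at hc
          · intro c hc
            rw [hs] at hc
            simp at hc
          · intro r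
            rw [Pp_succ, EvS_succ]
            have h1 : ¬ (∃ col, (run hn B (k + 1)).out = some (col, r)) := by
              rw [hs]; simp
            have h3 : indOK (run hn B (k + 1)) r := by
              intro a b hc'
              rw [hs] at hc'
              simp at hc'
            rw [if_pos h3, if_neg h1, if_neg (hevF r)]
            have h5 := ih4 r
            by_cases h6 : indOK (run hn B k) r
            · rw [if_pos h6] at h5; omega
            · rw [if_neg h6] at h5; omega
          · rw [EvA_succ]
            have he : (run hn B (k + 1)).ent = (run hn B k).ent := by rw [hs]
            rw [he]
            omega
        · -- descend to row j
          have hs : run hn B (k + 1) =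
              ⟨(run hn B k).bs ++ [B k], some (x, j), (run hn B k).ent, some (x, j)⟩ := by
            rw [hrun, step_blk_some hcur hb hnb]
          obtain ⟨⟨hji, hjnb⟩, hjmax⟩ := nextBelow_some hnb
          refine ⟨by rw [hs]; exact hbs', ?_, ?_, ?_, ?_⟩
          · intro x0 i0 hc
            rw [hs] at hc
            obtain ⟨rfl, rfl⟩ : x = x0 ∧ j = i0 := by
              simpa [Prod.ext_iff] using hc
            rw [hbs'] at hjnb hjmax
            refine ⟨hjnb, ?_, ?_⟩
            · rintro ⟨m, hm, hpm⟩
              rw [hps] at hpm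
              rcases pawnAt_append.mp hpm with h | h
              · exact hC2b ⟨m, by omega, h⟩
              · rw [hb] at h; simp at h
            · intro i' hi'
              rcases lt_trichotomy (i' : ℕ) (i : ℕ) with h | h | h
              · by_contra hnb2
                have := hjmax i' h hnb2
                omega
              · have : i' = i := Fin.ext h
                rw [this, hps]
                exact blkd_append.mpr (Or.inr hb)
              · rw [hps]
                exact blkd_append.mpr (Or.inl (hC2c i' h))
          · intro c hc
            rw [hs] at hc ⊢
            exact hc
          · intro r
            rw [Pp_succ, EvS_succ]
            rw [if_neg (hevF r)]
            by_cases hjr : j = r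
            · have h1 : (∃ col, (run hn B (k + 1)).out = some (col, r)) :=
                ⟨x, by rw [hs, hjr]⟩
              have h3 : indOK (run hn B (k + 1)) r := by
                intro a b hc'
                rw [hs] at hc'
                obtain ⟨-, rfl⟩ : x = a ∧ j = b := by simpa [Prod.ext_iff] using hc'
                omega
              have h6 : ¬ indOK (run hn B k) r := by
                intro H
                have := H x i hcur
                rw [← hjr] at this
                omega
              have h5 := ih4 r
              rw [if_neg h6] at h5
              rw [if_pos h1, if_pos h3]
              omega
            · have h1 : ¬ (∃ col, (run hn B (k + 1)).out = some (col, r)) := by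
                rintro ⟨col, hc'⟩
                rw [hs] at hc'
                have h9 : x = col ∧ j = r := by simpa [Prod.ext_iff] using hc'
                exact hjr h9.2
              rw [if_neg h1]
              have h5 := ih4 r
              by_cases h6 : indOK (run hn B k) r
              · have h3 : indOK (run hn B (k + 1)) r := by
                  intro a b hc'
                  rw [hs] at hc'
                  obtain ⟨-, rfl⟩ : x = a ∧ j = b := by simpa [Prod.ext_iff] using hc'
                  have := h6 x i hcur
                  omega
                rw [if_pos h6] at h5
                rw [if_pos h3]
                omega
              · rw [if_neg h6] at h5
                by_cases h3 : indOK (run hn B (k + 1)) r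
                · rw [if_pos h3]; omega
                · rw [if_neg h3]; omega
          · rw [EvA_succ]
            have he : (run hn B (k + 1)).ent = (run hn B k).ent := by rw [hs]
            rw [he]
            omega
      · by_cases hev : ∃ m : Fin n, (m : ℕ) < (i : ℕ) ∧ B k = some (Sum.inl (x, m))
        · -- eviction
          have hEvt : Evt hn B k := by
            obtain ⟨m, hm, hbm⟩ := hev
            exact ⟨x, i, m, hcur, hm, hbm⟩
          have hEL : ∀ r : Fin n, EvtL hn B r k ↔ (i : ℕ) ≤ (r : ℕ) := by
            intro r
            constructor
            · rintro ⟨x', r', m', hc', hm', hB', hle⟩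
              rw [hcur] at hc'
              obtain ⟨-, rfl⟩ : x = x' ∧ i = r' := by simpa [Prod.ext_iff] using hc'
              exact hle
            · intro hle
              obtain ⟨m, hm, hbm⟩ := hev
              exact ⟨x, i, m, hcur, hm, hbm, hle⟩
          have hindold : ∀ r : Fin n, indOK (run hn B k) r ↔ (i : ℕ) ≤ (r : ℕ) := by
            intro r
            constructor
            · intro H; exact H x i hcur
            · intro hle a b hc'
              rw [hcur] at hc'
              obtain ⟨-, rfl⟩ : x = a ∧ i = b := by simpa [Prod.ext_iff] using hc'
              exact hle
          rcases hf : freshCol (run hn B k).ent ((run hn B k).bs ++ [B k]) with _ | x'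
          · -- no fresh column: give up (unreachable when Black is clean)
            have hs : run hn B (k + 1) =
                ⟨(run hn B k).bs ++ [B k], none, (run hn B k).ent, none⟩ := by
              rw [hrun, step_ev_nofresh hcur hb hev hf]
            refine ⟨by rw [hs]; exact hbs', ?_, ?_, ?_, ?_⟩
            · intro x0 i0 hc
              rw [hs] at hc
              simp at hc
            · intro c hc
              rw [hs] at hc
              simp at hc
            · intro r
              rw [Pp_succ, EvS_succ]
              have h1 : ¬ (∃ col, (run hn B (k + 1)).out = some (col, r)) := by
                rw [hs]; simp
              have h3 : indOK (run hn B (k + 1)) r := by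
                intro a b hc'
                rw [hs] at hc'
                simp at hc'
              rw [if_pos h3, if_neg h1]
              have h5 := ih4 r
              by_cases h6 : (i : ℕ) ≤ (r : ℕ)
              · rw [if_pos ((hindold r).mpr h6)] at h5
                rw [if_pos ((hEL r).mpr h6)]
                omega
              · rw [if_neg (fun H => h6 ((hindold r).mp H))] at h5
                rw [if_neg (fun H => h6 ((hEL r).mp H))]
                omega
            · rw [EvA_succ]
              have he : (run hn B (k + 1)).ent = (run hn B k).ent := by rw [hs]
              rw [he]
              omega
          · rcases ht : topFree ((run hn B k).bs ++ [B k]) x' with _ | e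
            · -- fresh column fully blackened: give up (unreachable when Black is clean)
              have hs : run hn B (k + 1) =
                  ⟨(run hn B k).bs ++ [B k], none, (run hn B k).ent, none⟩ := by
                rw [hrun, step_ev_notop hcur hb hev hf ht]
              refine ⟨by rw [hs]; exact hbs', ?_, ?_, ?_, ?_⟩
              · intro x0 i0 hc
                rw [hs] at hc
                simp at hc
              · intro c hc
                rw [hs] at hc
                simp at hc
              · intro r
                rw [Pp_succ, EvS_succ]
                have h1 : ¬ (∃ col, (run hn B (k + 1)).out = some (col, r)) := by
                  rw [hs]; simp
                have h3 : indOK (run hn B (k + 1)) r := by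
                  intro a b hc'
                  rw [hs] at hc'
                  simp at hc'
                rw [if_pos h3, if_neg h1]
                have h5 := ih4 r
                by_cases h6 : (i : ℕ) ≤ (r : ℕ)
                · rw [if_pos ((hindold r).mpr h6)] at h5
                  rw [if_pos ((hEL r).mpr h6)]
                  omega
                · rw [if_neg (fun H => h6 ((hindold r).mp H))] at h5
                  rw [if_neg (fun H => h6 ((hEL r).mp H))]
                  omega
              · rw [EvA_succ]
                have he : (run hn B (k + 1)).ent = (run hn B k).ent := by rw [hs]
                rw [he]
                omega
            · -- move to fresh column x' at row e
              have hs : run hn B (k + 1) =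
                  ⟨(run hn B k).bs ++ [B k], some (x', e),
                    insert x' (run hn B k).ent, some (x', e)⟩ := by
                rw [hrun, step_ev_some hcur hb hev hf ht]
              obtain ⟨hx'ent, hx'cl⟩ := freshCol_some hf
              obtain ⟨henb, hemax⟩ := topFree_some ht
              refine ⟨by rw [hs]; exact hbs', ?_, ?_, ?_, ?_⟩
              · intro x0 i0 hc
                rw [hs] at hc
                obtain ⟨rfl, rfl⟩ : x' = x0 ∧ e = i0 := by
                  simpa [Prod.ext_iff] using hc
                rw [hbs'] at henb hemax
                have hx'cl' := hx'cl
                rw [hbs'] at hx'cl'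
                refine ⟨henb, ?_, ?_⟩
                · rintro ⟨m, hm, hpm⟩
                  exact hx'cl' m (by have := e.isLt; omega) hpm
                · intro i' hi'
                  by_contra hnb2
                  have := hemax i' hnb2
                  omega
              · intro c hc
                rw [hs] at hc ⊢
                exact hc
              · intro r
                rw [Pp_succ, EvS_succ]
                by_cases her : e = r
                · have h1 : (∃ col, (run hn B (k + 1)).out = some (col, r)) := by
                    refine ⟨x', ?_⟩
                    rw [hs]
                    simp [her]
                  have h3 : indOK (run hn B (k + 1)) r := by
                    intro a b hc'
                    rw [hs] at hc'
                    obtain ⟨-, rfl⟩ : x' = a ∧ e = b := by simpa [Prod.ext_iff] using hc'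
                    rw [← her]
                  have h5 := ih4 r
                  rw [if_pos h1, if_pos h3]
                  by_cases h6 : (i : ℕ) ≤ (r : ℕ)
                  · rw [if_pos ((hindold r).mpr h6)] at h5
                    rw [if_pos ((hEL r).mpr h6)]
                    omega
                  · rw [if_neg (fun H => h6 ((hindold r).mp H))] at h5
                    rw [if_neg (fun H => h6 ((hEL r).mp H))]
                    omega
                · have h1 : ¬ (∃ col, (run hn B (k + 1)).out = some (col, r)) := by
                    rintro ⟨col, hc'⟩
                    rw [hs] at hc'
                    have h9 : x' = col ∧ e = r := by simpa [Prod.ext_iff] using hc'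
                    exact her h9.2
                  rw [if_neg h1]
                  have h5 := ih4 r
                  have harith : (Pp hn B r (k + 1)).card ≤
                      (EvS hn B r k).card + (if EvtL hn B r k then 1 else 0) := by
                    by_cases h6 : (i : ℕ) ≤ (r : ℕ)
                    · rw [if_pos ((hindold r).mpr h6)] at h5
                      rw [if_pos ((hEL r).mpr h6)]
                      omega
                    · rw [if_neg (fun H => h6 ((hindold r).mp H))] at h5
                      rw [if_neg (fun H => h6 ((hEL r).mp H))]
                      omega
                  by_cases h3 : indOK (run hn B (k + 1)) r
                  · rw [if_pos h3]; omega
                  · rw [if_neg h3]; omega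
              · rw [EvA_succ, if_pos hEvt]
                have he : (run hn B (k + 1)).ent = insert x' (run hn B k).ent := by
                  rw [hs]
                rw [he]
                have := Finset.card_insert_le x' (run hn B k).ent
                omega
        · -- nothing happened to the current pawn
          have hs : run hn B (k + 1) =
              ⟨(run hn B k).bs ++ [B k], some (x, i), (run hn B k).ent, none⟩ := by
            rw [hrun, step_nokill hcur hb hev]
          obtain ⟨hC2a, hC2b, hC2c⟩ := ih2 x i hcur
          have hevF : ∀ r : Fin n, ¬ EvtL hn B r k := by
            rintro r ⟨x', r', m, hc', hm', hB', -⟩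
            rw [hcur] at hc'
            obtain ⟨rfl, rfl⟩ : x = x' ∧ i = r' := by simpa [Prod.ext_iff] using hc'
            exact hev ⟨m, hm', hB'⟩
          refine ⟨by rw [hs]; exact hbs', ?_, ?_, ?_, ?_⟩
          · intro x0 i0 hc
            rw [hs] at hc
            obtain ⟨rfl, rfl⟩ : x = x0 ∧ i = i0 := by simpa [Prod.ext_iff] using hc
            rw [hps]
            refine ⟨?_, ?_, ?_⟩
            · intro hbk
              rcases blkd_append.mp hbk with h | h
              · exact hC2a h
              · exact hb h
            · rintro ⟨m, hm, hpm⟩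
              rcases pawnAt_append.mp hpm with h | h
              · exact hC2b ⟨m, hm, h⟩
              · exact hev ⟨m, hm, h⟩
            · intro i' hi'
              exact blkd_append.mpr (Or.inl (hC2c i' hi'))
          · intro c hc
            rw [hs] at hc
            simp at hc
          · intro r
            rw [Pp_succ, EvS_succ]
            have h1 : ¬ (∃ col, (run hn B (k + 1)).out = some (col, r)) := by
              rw [hs]; simp
            rw [if_neg h1, if_neg (hevF r)]
            have h5 := ih4 r
            have hcur' : (run hn B (k + 1)).cur = some (x, i) := by rw [hs]
            by_cases h6 : indOK (run hn B k) r
            · have h3 : indOK (run hn B (k + 1)) r := by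
                intro a b hc'
                rw [hcur'] at hc'
                obtain ⟨-, rfl⟩ : x = a ∧ i = b := by simpa [Prod.ext_iff] using hc'
                exact h6 x i hcur
              rw [if_pos h6] at h5
              rw [if_pos h3]
              omega
            · rw [if_neg h6] at h5
              by_cases h3 : indOK (run hn B (k + 1)) r
              · rw [if_pos h3]; omega
              · rw [if_neg h3]; omega
          · rw [EvA_succ]
            have he : (run hn B (k + 1)).ent = (run hn B k).ent := by rw [hs]
            rw [he]
            omega

section Bounds
variable (B : ℕ → BMove n)

lemma geom : ∀ i : ℕ, (∑ r ∈ Finset.range i, 2 ^ r) + 1 = 2 ^ i := by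
  intro i
  induction i with
  | zero => simp
  | succ i ih => rw [Finset.sum_range_succ, pow_succ]; omega

lemma sum_pow_le (S : Finset (Fin n)) (i : ℕ) (hS : ∀ m ∈ S, (m : ℕ) < i) :
    (∑ m ∈ S, 2 ^ (m : ℕ)) + 1 ≤ 2 ^ i := by
  have h1 : ∑ m ∈ S, 2 ^ (m : ℕ) = ∑ r ∈ S.image (Fin.val), 2 ^ r :=
    (Finset.sum_image (by intros a _ b _ h; exact Fin.val_injective h)).symm
  have h2 : S.image Fin.val ⊆ Finset.range i := by
    intro r hr
    simp only [Finset.mem_image] at hr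
    obtain ⟨m, hm, rfl⟩ := hr
    exact Finset.mem_range.mpr (hS m hm)
  have h3 : ∑ r ∈ S.image Fin.val, 2 ^ r ≤ ∑ r ∈ Finset.range i, 2 ^ r :=
    Finset.sum_le_sum_of_subset h2
  have h4 := geom i
  omega

noncomputable def BP (i k : ℕ) : Finset ℕ :=
  (Finset.range k).filter
    (fun j => ∃ (col : Fin (2 ^ n)) (m : Fin n), (m : ℕ) < i ∧ B j = some (Sum.inl (col, m)))

lemma ncard_row (r : Fin n) (k : ℕ) :
    {j : ℕ | j ≤ k ∧ ∃ col, B j = some (Sum.inl (col, r))}.ncard =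
      ((Finset.range (k + 1)).filter (fun j => ∃ col, B j = some (Sum.inl (col, r)))).card := by
  rw [← Set.ncard_coe_finset]
  congr 1
  ext j
  simp [Nat.lt_succ_iff]

lemma bp_bound (k i : ℕ) (hcl : ∀ j, j < k → ¬ BViol n B j) : (BP B i k).card + 1 ≤ 2 ^ i := by
  cases k with
  | zero =>
    have : (BP B i 0).card = 0 := by simp [BP]
    rw [this]
    exact Nat.one_le_two_pow
  | succ k' =>
    have hnb := hcl k' (Nat.lt_succ_self k')
    rw [BViol] at hnb
    push_neg at hnb
    have hcnt : ∀ r : Fin n,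
        ((Finset.range (k' + 1)).filter
          (fun j => ∃ col, B j = some (Sum.inl (col, r)))).card ≤ 2 ^ (r : ℕ) := by
      intro r
      have := hnb.1 r
      rwa [ncard_row] at this
    have hsub : BP B i (k' + 1) ⊆
        (Finset.univ.filter (fun m : Fin n => (m : ℕ) < i)).biUnion
          (fun m => (Finset.range (k' + 1)).filter
            (fun j => ∃ col, B j = some (Sum.inl (col, m)))) := by
      intro j hj
      simp only [BP, Finset.mem_filter, Finset.mem_range] at hj
      obtain ⟨hjk, col, m, hmi, hBj⟩ := hj
      simp only [Finset.mem_biUnion, Finset.mem_filter, Finset.mem_univ, Finset.mem_range]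
      exact ⟨m, ⟨trivial, hmi⟩, ⟨hjk, col, hBj⟩⟩
    have h5 := Finset.card_le_card hsub
    have h6 := Finset.card_biUnion_le (s := Finset.univ.filter (fun m : Fin n => (m : ℕ) < i))
      (t := fun m => (Finset.range (k' + 1)).filter
        (fun j => ∃ col, B j = some (Sum.inl (col, m))))
    have h7 : ∑ m ∈ Finset.univ.filter (fun m : Fin n => (m : ℕ) < i),
        ((Finset.range (k' + 1)).filter
          (fun j => ∃ col, B j = some (Sum.inl (col, m)))).card ≤
        ∑ m ∈ Finset.univ.filter (fun m : Fin n => (m : ℕ) < i), 2 ^ (m : ℕ) :=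
      Finset.sum_le_sum (fun m _ => hcnt m)
    have h8 := sum_pow_le (Finset.univ.filter (fun m : Fin n => (m : ℕ) < i)) i
      (fun m hm => (Finset.mem_filter.mp hm).2)
    omega

end Bounds

section WhiteSide
variable (hn : 1 ≤ n) (B : ℕ → BMove n)

lemma evs_sub_bp (r : Fin n) (k : ℕ) : EvS hn B r k ⊆ BP B (r : ℕ) k := by
  intro j hj
  simp only [EvS, Finset.mem_filter] at hj
  obtain ⟨hjk, x', r', m, hc', hm', hB', hle⟩ := hj
  simp only [BP, Finset.mem_filter]
  exact ⟨hjk, x', m, by omega, hB'⟩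

lemma eva_sub_bp (k : ℕ) (hn1 : 1 ≤ n) : EvA hn B k ⊆ BP B (n - 1) k := by
  intro j hj
  simp only [EvA, Finset.mem_filter] at hj
  obtain ⟨hjk, x', r', m, hc', hm', hB'⟩ := hj
  simp only [BP, Finset.mem_filter]
  have := r'.isLt
  exact ⟨hjk, x', m, by omega, hB'⟩

lemma pp_le (k : ℕ) (hcl : ∀ j, j < k → ¬ BViol n B j) (r : Fin n) :
    (Pp hn B r (k + 1)).card ≤ 2 ^ (r : ℕ) := by
  have h4 := (main_inv hn B k).2.2.2.1 r
  have hc := Finset.card_le_card (evs_sub_bp hn B r k)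
  have hbp := bp_bound B k (r : ℕ) hcl
  have h9 : (if indOK (run hn B k) r then 1 else 0) ≤ 1 := by split <;> omega
  omega

lemma ncard_pp (r : Fin n) (k : ℕ) :
    {j : ℕ | j ≤ k ∧ ∃ col, (run hn B j).out = some (col, r)}.ncard =
      (Pp hn B r (k + 1)).card := by
  rw [← Set.ncard_coe_finset]
  congr 1
  ext j
  simp [Pp, Nat.lt_succ_iff]

lemma white_ok (k : ℕ) (hcl : ∀ j, j < k → ¬ BViol n B j) :
    ¬ WViol n (fun j => (run hn B j).out) k := by
  rintro ⟨r, hr⟩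
  simp only [] at hr
  rw [ncard_pp hn B r k] at hr
  have := pp_le hn B k hcl r
  omega

end WhiteSide


section Liveness
variable (hn : 1 ≤ n) (B : ℕ → BMove n)

lemma allblk_viol (hn1 : 1 ≤ n) (B : ℕ → BMove n) (x : Fin (2 ^ n)) (k : ℕ)
    (h : ∀ r : Fin n, blkd (pref B (k + 1)) x r) : BViol n B k := by
  right
  refine ⟨x, ?_⟩
  have hset : {i : Fin n | ∃ j ≤ k, B j = some (Sum.inr (x, i))} = Set.univ := by
    apply Set.eq_univ_of_forall
    intro r
    obtain ⟨j, hj, hBj⟩ := (mem_pref B).mp (h r)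
    exact ⟨j, by omega, hBj⟩
  rw [hset, Set.ncard_univ, Nat.card_eq_fintype_card, Fintype.card_fin]
  omega

lemma dirty_le (k : ℕ) :
    (Finset.univ.filter (fun x : Fin (2 ^ n) => ¬ cleanCol (pref B k) x)).card ≤
      (BP B (n - 1) k).card := by
  have hwit : ∀ x : Fin (2 ^ n),
      ∃ j, x ∈ Finset.univ.filter (fun x : Fin (2 ^ n) => ¬ cleanCol (pref B k) x) →
        (j ∈ BP B (n - 1) k ∧ ∃ m : Fin n, B j = some (Sum.inl (x, m))) := by
    intro x
    by_cases hx : x ∈ Finset.univ.filter (fun x : Fin (2 ^ n) => ¬ cleanCol (pref B k) x)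
    · simp only [Finset.mem_filter, Finset.mem_univ, true_and] at hx
      rw [cleanCol] at hx
      push_neg at hx
      obtain ⟨m, hmn, hpm⟩ := hx
      obtain ⟨j, hjk, hBj⟩ := (mem_pref B).mp hpm
      refine ⟨j, fun _ => ⟨?_, m, hBj⟩⟩
      simp only [BP, Finset.mem_filter, Finset.mem_range]
      exact ⟨hjk, x, m, by omega, hBj⟩
    · exact ⟨0, fun h => absurd h hx⟩
  choose f hf using hwit
  apply Finset.card_le_card_of_injOn f (fun a ha => (hf a ha).1)
  intro x1 h1 x2 h2 heq
  obtain ⟨m1, hm1⟩ := (hf x1 h1).2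
  obtain ⟨m2, hm2⟩ := (hf x2 h2).2
  rw [heq, hm2] at hm1
  exact ((by simpa [Prod.ext_iff] using hm1 : x2 = x1 ∧ m2 = m1)).1.symm

lemma cur_some (hcl : ∀ j, ¬ BViol n B j) (k : ℕ) :
    ∃ xi : Cell n, (run hn B k).cur = some xi := by
  induction k with
  | zero => exact ⟨_, rfl⟩
  | succ k IHs =>
    obtain ⟨⟨x, i⟩, hcur⟩ := IHs
    obtain ⟨ih1, ih2, ih3, ih4, ih5⟩ := main_inv hn B k
    have hrun : run hn B (k + 1) = step (run hn B k) (B k) := rfl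
    have hps : pref B (k + 1) = pref B k ++ [B k] := pref_succ B k
    have hbs' : (run hn B k).bs ++ [B k] = pref B (k + 1) := by rw [ih1, hps]
    by_cases hb : B k = some (Sum.inr (x, i))
    · rcases hnb : nextBelow ((run hn B k).bs ++ [B k]) x i with _ | j
      · exfalso
        apply hcl k
        apply allblk_viol hn B x k
        intro r
        rcases lt_trichotomy (r : ℕ) (i : ℕ) with h | h | h
        · have := nextBelow_none hnb r h
          rwa [hbs'] at this
        · have : r = i := Fin.ext h
          rw [this, hps]
          exact blkd_append.mpr (Or.inr hb)
        · rw [hps]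
          exact blkd_append.mpr (Or.inl ((ih2 x i hcur).2.2 r h))
      · exact ⟨(x, j), by rw [hrun, step_blk_some hcur hb hnb]⟩
    · by_cases hev : ∃ m : Fin n, (m : ℕ) < (i : ℕ) ∧ B k = some (Sum.inl (x, m))
      · rcases hf : freshCol (run hn B k).ent ((run hn B k).bs ++ [B k]) with _ | x'
        · exfalso
          have hfn := freshCol_none hf
          have huniv : (Finset.univ : Finset (Fin (2 ^ n))) ⊆
              (run hn B k).ent ∪
                (Finset.univ.filter (fun y : Fin (2 ^ n) => ¬ cleanCol (pref B (k + 1)) y)) := by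
            intro y _
            by_cases hy : y ∈ (run hn B k).ent
            · exact Finset.mem_union_left _ hy
            · refine Finset.mem_union_right _ ?_
              simp only [Finset.mem_filter, Finset.mem_univ, true_and]
              have := hfn y hy
              rwa [hbs'] at this
          have hcard : 2 ^ n ≤ (run hn B k).ent.card +
              (Finset.univ.filter
                (fun y : Fin (2 ^ n) => ¬ cleanCol (pref B (k + 1)) y)).card := by
            have h1 := Finset.card_le_card huniv
            have h2 := Finset.card_union_le (run hn B k).ent
              (Finset.univ.filter (fun y : Fin (2 ^ n) => ¬ cleanCol (pref B (k + 1)) y))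
            simp only [Finset.card_univ, Fintype.card_fin] at h1
            omega
          have hEvBP : (EvA hn B k).card + 1 ≤ (BP B (n - 1) (k + 1)).card := by
            have hkin : k ∈ BP B (n - 1) (k + 1) := by
              obtain ⟨m, hm, hBm⟩ := hev
              simp only [BP, Finset.mem_filter, Finset.mem_range]
              have := i.isLt
              exact ⟨by omega, x, m, by omega, hBm⟩
            have hsub : insert k (EvA hn B k) ⊆ BP B (n - 1) (k + 1) := by
              intro j hj
              rcases Finset.mem_insert.mp hj with rfl | hj
              · exact hkin
              · have h3 := eva_sub_bp hn B k hn hj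
                simp only [BP, Finset.mem_filter, Finset.mem_range] at h3 ⊢
                exact ⟨by omega, h3.2⟩
            have hnotin : k ∉ EvA hn B k := by
              simp [EvA]
            have := Finset.card_le_card hsub
            rwa [Finset.card_insert_of_notMem hnotin] at this
          have hdirty := dirty_le B (k + 1)
          have hbp := bp_bound B (k + 1) (n - 1) (fun j _ => hcl j)
          have h2n : 2 ^ n = 2 * 2 ^ (n - 1) := by
            conv_lhs => rw [← Nat.sub_add_cancel hn]
            rw [pow_succ]
            omega
          omega
        · rcases ht : topFree ((run hn B k).bs ++ [B k]) x' with _ | e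
          · exfalso
            apply hcl k
            apply allblk_viol hn B x' k
            intro r
            have := topFree_none ht r
            rwa [hbs'] at this
          · exact ⟨(x', e), by rw [hrun, step_ev_some hcur hb hev hf ht]⟩
      · exact ⟨(x, i), by rw [hrun, step_nokill hcur hb hev]⟩

end Liveness


section Bridge

lemma foldl_pref (hn : 1 ≤ n) (B : ℕ → BMove n) (k : ℕ) :
    (pref B k).foldl step (init n hn) = run hn B k := by
  induction k with
  | zero => rfl
  | succ k ih => rw [pref_succ, List.foldl_append, ih]; rfl

lemma hist_succ (σ : WStrat n) (τ : BStrat n) (k : ℕ) :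
    hist n σ τ (k + 1) = hist n σ τ k ++ [(wmove n σ τ k, bmove n σ τ k)] := rfl

lemma hist_snd (σ : WStrat n) (τ : BStrat n) (k : ℕ) :
    (hist n σ τ k).map Prod.snd = (List.range k).map (bmove n σ τ) := by
  induction k with
  | zero => rfl
  | succ k ih => rw [List.range_succ, hist_succ, List.map_append, List.map_append, ih]; rfl

lemma wmove_eq (hn : 1 ≤ n) (τ : BStrat n) (k : ℕ) :
    wmove n (sigma n hn) τ k = (run hn (bmove n (sigma n hn) τ) k).out := by
  rw [wmove, hist_snd]
  show ((pref (bmove n (sigma n hn) τ) k).foldl step (init n hn)).out = _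
  rw [foldl_pref]

end Bridge

section Final

lemma black_clean_alive (hn : 1 ≤ n) (B : ℕ → BMove n) (hcl : ∀ j, ¬ BViol n B j) :
    Alive n (fun j => (run hn B j).out) B := by
  have hfin : ∀ r : Fin n, {j : ℕ | ∃ col, (run hn B j).out = some (col, r)}.Finite := by
    intro r
    by_contra hinf
    have hinf' : {j : ℕ | ∃ col, (run hn B j).out = some (col, r)}.Infinite := hinf
    obtain ⟨T, hTsub, hTcard⟩ := hinf'.exists_subset_card_eq (2 ^ (r : ℕ) + 1)
    have hTne : T.Nonempty := by rw [← Finset.card_pos, hTcard]; exact Nat.succ_pos _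
    have hsub2 : T ⊆ Pp hn B r (T.max' hTne + 1) := by
      intro j hj
      have hjS := hTsub hj
      simp only [Set.mem_setOf_eq] at hjS
      simp only [Pp, Finset.mem_filter, Finset.mem_range]
      exact ⟨Nat.lt_succ_of_le (Finset.le_max' T j hj), hjS⟩
    have h1 := Finset.card_le_card hsub2
    have hpp := pp_le hn B (T.max' hTne) (fun j _ => hcl j) r
    omega
  have hfin2 : {j : ℕ | (run hn B j).out ≠ none}.Finite := by
    apply Set.Finite.subset (Set.finite_iUnion hfin)
    intro j hj
    simp only [Set.mem_setOf_eq] at hj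
    rcases ho : (run hn B j).out with _ | ⟨col, r⟩
    · exact absurd ho hj
    · exact Set.mem_iUnion.mpr ⟨r, ⟨col, ho⟩⟩
  have hout0 : (run hn B 0).out ≠ none := by
    show (init n hn).out ≠ none
    rw [init]
    simp
  have hFne : hfin2.toFinset.Nonempty := ⟨0, by rwa [Set.Finite.mem_toFinset]⟩
  set K := hfin2.toFinset.max' hFne with hKdef
  have hK : (run hn B K).out ≠ none := by
    have := hfin2.toFinset.max'_mem hFne
    rwa [Set.Finite.mem_toFinset] at this
  obtain ⟨⟨x, i⟩, hKout⟩ := Option.ne_none_iff_exists'.mp hK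
  have hnolater : ∀ j, K < j → (run hn B j).out = none := by
    intro j hj
    by_contra hne2
    have hmem : j ∈ hfin2.toFinset := (Set.Finite.mem_toFinset _).mpr hne2
    have := hfin2.toFinset.le_max' j hmem
    omega
  have hcurK : (run hn B K).cur = some (x, i) := (main_inv hn B K).2.2.1 _ hKout
  have hstep : ∀ k, K ≤ k → (run hn B k).cur = some (x, i) →
      (run hn B (k + 1)).cur = some (x, i) ∧ B k ≠ some (Sum.inr (x, i)) ∧
        ∀ m : Fin n, (m : ℕ) < (i : ℕ) → B k ≠ some (Sum.inl (x, m)) := by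
    intro k hk hcur
    have hout1 : (run hn B (k + 1)).out = none := hnolater (k + 1) (by omega)
    obtain ⟨xi2, hc2⟩ := cur_some hn B hcl (k + 1)
    have hrun : run hn B (k + 1) = step (run hn B k) (B k) := rfl
    by_cases hb : B k = some (Sum.inr (x, i))
    · exfalso
      rcases hnb : nextBelow ((run hn B k).bs ++ [B k]) x i with _ | j
      · rw [hrun, step_blk_none hcur hb hnb] at hc2
        simp at hc2
      · rw [hrun, step_blk_some hcur hb hnb] at hout1
        simp at hout1
    · by_cases hev : ∃ m : Fin n, (m : ℕ) < (i : ℕ) ∧ B k = some (Sum.inl (x, m))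
      · exfalso
        rcases hf : freshCol (run hn B k).ent ((run hn B k).bs ++ [B k]) with _ | x'
        · rw [hrun, step_ev_nofresh hcur hb hev hf] at hc2
          simp at hc2
        · rcases ht : topFree ((run hn B k).bs ++ [B k]) x' with _ | e
          · rw [hrun, step_ev_notop hcur hb hev hf ht] at hc2
            simp at hc2
          · rw [hrun, step_ev_some hcur hb hev hf ht] at hout1
            simp at hout1
      · exact ⟨by rw [hrun, step_nokill hcur hb hev], hb, fun m hm hBm => hev ⟨m, hm, hBm⟩⟩
  have hall : ∀ d, (run hn B (K + d)).cur = some (x, i) := by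
    intro d
    induction d with
    | zero => simpa using hcurK
    | succ d ih => exact (hstep (K + d) (by omega) ih).1
  refine ⟨K, x, i, hKout, ?_, ?_⟩
  · intro j
    rcases lt_or_ge j K with hj | hj
    · intro hBj
      have hblk : blkd (pref B K) x i := (mem_pref B).mpr ⟨j, hj, hBj⟩
      exact ((main_inv hn B K).2.1 x i hcurK).1 hblk
    · obtain ⟨d, rfl⟩ : ∃ d, j = K + d := ⟨j - K, by omega⟩
      exact (hstep (K + d) (by omega) (hall d)).2.1
  · intro j m hm
    rcases lt_or_ge j K with hj | hj
    · intro hBj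
      exact ((main_inv hn B K).2.1 x i hcurK).2.1 ⟨m, hm, (mem_pref B).mpr ⟨j, hj, hBj⟩⟩
    · obtain ⟨d, rfl⟩ : ∃ d, j = K + d := ⟨j - K, by omega⟩
      exact (hstep (K + d) (by omega) (hall d)).2.2 m hm

end Final

end Stmt15

/-- For every `n ≥ 1`, White has a winning strategy in the game `G n`. -/
theorem stmt_15 (n : ℕ) (hn : 1 ≤ n) :
    ∃ σ : WStrat n, ∀ τ : BStrat n, WhiteWins n (wmove n σ τ) (bmove n σ τ) := by
  classical
  refine ⟨Stmt15.sigma n hn, fun τ => ?_⟩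
  set B := bmove n (Stmt15.sigma n hn) τ with hB
  have hw : wmove n (Stmt15.sigma n hn) τ = fun k => (Stmt15.run hn B k).out :=
    funext (Stmt15.wmove_eq hn τ)
  rw [WhiteWins, hw]
  by_cases hex : ∃ k, BViol n B k
  · left
    refine ⟨Nat.find hex, Nat.find_spec hex, ?_⟩
    intro j hj
    exact Stmt15.white_ok hn B j
      (fun j' hj' => Nat.find_min hex (by omega))
  · push_neg at hex
    right
    exact ⟨fun k => Stmt15.white_ok hn B k (fun j _ => hex j), hex,
      Stmt15.black_clean_alive hn B hex⟩
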